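/- There is no self-similar cellular automaton with states containing {0,1}, no time t > 0, and no local rule such that, when started at time 0 with a configuration from the set C = {0^∞} ∪ {configurations with exactly one cell in state 1, at some positive index, all other cells 0}, the (deterministic) state of cell 0 at time t equals 1 if and only if the initial configuration contains a 1. -/

import Mathlib

/-- An evolution of a self-similar cellular automaton `(S, fc, fd)` started at time 0:
`c j k` is the state of cell `j ∈ ℤ` during its cycle `(k+𝟙)/2^j`, `k ∈ ℕ`.
Cycle `k ≥ 1` of cell `j` is coupled iff `k` is even, and the state is obtained by
applying `fc` (resp. `fd`) to the states of the last cycles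
`T↙ = (⌊(k-1)/2⌋+𝟙)/2^(j-1)`, `T↓ = (k-1+𝟙)/2^j`, `T↘ = (2k-1+𝟙)/2^(j+1)`;
cycle 0 carries the initial configuration. -/
def Evolution {S : Type*} (fc fd : S → S → S → S) (init : ℤ → S) (c : ℤ → ℕ → S) : Prop :=
  (∀ j, c j 0 = init j) ∧
  ∀ (j : ℤ) (k : ℕ), 0 < k →
    c j k = (if Even k then fc else fd)
      (c (j - 1) ((k - 1) / 2)) (c j (k - 1)) (c (j + 1) (2 * k - 1))

namespace SscaNoDetector

variable {S : Type*}

/-- Truncated solution on the strip of cells `≤ N` (cell index `j = N - i`),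
with constant boundary value `v` to the right of the strip. -/
def go (fc fd : S → S → S → S) (init : ℤ → S) (v : S) (N : ℕ) : ℕ → ℕ → S
  | i, 0 => init ((N : ℤ) - i)
  | 0, m+1 => (if Even (m+1) then fc else fd)
      (go fc fd init v N 1 (m/2)) (go fc fd init v N 0 m) v
  | i+1, m+1 => (if Even (m+1) then fc else fd)
      (go fc fd init v N (i+2) (m/2)) (go fc fd init v N (i+1) m)
      (go fc fd init v N i (2*m+1))
termination_by i m => m * 2^i
decreasing_by
  all_goals have h1 : m / 2 * 2 ≤ m := Nat.div_mul_le_self m 2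
  all_goals have hp : ∀ n : ℕ, (0:ℕ) < 2^n := fun n => Nat.pow_pos (by norm_num)
  · calc m / 2 * 2 ^ 1 ≤ m * 1 := by simpa using h1
    _ < (m+1) * 2 ^ 0 := by omega
  · simp
  · have h2 : m / 2 * 2 ^ (i + 2) ≤ m * 2 ^ (i+1) := by
      rw [pow_succ 2 (i+1), ← mul_assoc]
      calc m / 2 * 2 ^ (i+1) * 2 = m / 2 * 2 * 2 ^ (i+1) := by ring
      _ ≤ m * 2 ^ (i+1) := Nat.mul_le_mul_right _ h1
    have h3 : m * 2 ^ (i+1) < (m+1) * 2^(i+1) := (Nat.mul_lt_mul_right (hp _)).mpr (by omega)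
    simp only [Nat.succ_eq_add_one]; exact lt_of_le_of_lt h2 h3
  · exact (Nat.mul_lt_mul_right (hp _)).mpr (by omega)
  · calc (2*m+1) * 2 ^ i < (2*m+2) * 2^i := (Nat.mul_lt_mul_right (hp _)).mpr (by omega)
    _ = (m+1) * 2^(i+1) := by ring

/-- The truncated solution, as a full configuration (boundary `v` to the right). -/
def trunc (fc fd : S → S → S → S) (init : ℤ → S) (v : S) (N : ℕ) : ℤ → ℕ → S :=
  fun j m => if (N : ℤ) < j then v else go fc fd init v N ((N : ℤ) - j).toNat m

lemma trunc_init (fc fd : S → S → S → S) (init : ℤ → S) (v : S) (N : ℕ)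
    (j : ℤ) (hj : j ≤ (N : ℤ)) : trunc fc fd init v N j 0 = init j := by
  have h : ¬ (N : ℤ) < j := not_lt.mpr hj
  have h2 : (N : ℤ) - (((N : ℤ) - j).toNat : ℤ) = j := by omega
  simp only [trunc, if_neg h, go, h2]

lemma trunc_eq (fc fd : S → S → S → S) (init : ℤ → S) (v : S) (N : ℕ)
    (j : ℤ) (hj : j ≤ (N : ℤ)) (m : ℕ) (hm : 0 < m) :
    trunc fc fd init v N j m = (if Even m then fc else fd)
      (trunc fc fd init v N (j - 1) ((m - 1) / 2))
      (trunc fc fd init v N j (m - 1))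
      (trunc fc fd init v N (j + 1) (2 * m - 1)) := by
  obtain ⟨m', rfl⟩ : ∃ m', m = m' + 1 := ⟨m - 1, by omega⟩
  have h : ¬ (N : ℤ) < j := not_lt.mpr hj
  have h' : ¬ (N : ℤ) < j - 1 := by omega
  have hm1 : m' + 1 - 1 = m' := rfl
  have hm2 : (m' + 1 - 1) / 2 = m' / 2 := rfl
  have hm3 : 2 * (m' + 1) - 1 = 2 * m' + 1 := by omega
  rcases eq_or_lt_of_le hj with heq | hlt
  · -- j = N : right neighbour is the boundary
    have h0 : ((N : ℤ) - j).toNat = 0 := by omega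
    have h1 : ((N : ℤ) - (j - 1)).toNat = 1 := by omega
    have hb : (N : ℤ) < j + 1 := by omega
    simp only [trunc, if_neg h, if_neg h', if_pos hb, h0, h1, hm1, hm2, hm3]
    rw [go]
  · -- j < N : interior
    have hb : ¬ (N : ℤ) < j + 1 := by omega
    obtain ⟨i', hi'⟩ : ∃ i', ((N : ℤ) - j).toNat = i' + 1 :=
      ⟨((N : ℤ) - j).toNat - 1, by omega⟩
    have h1 : ((N : ℤ) - (j - 1)).toNat = i' + 2 := by omega
    have h2 : ((N : ℤ) - (j + 1)).toNat = i' := by omega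
    simp only [trunc, if_neg h, if_neg h', if_neg hb, hi', h1, h2, hm1, hm2, hm3]
    rw [go]

noncomputable def uf : Ultrafilter ℕ := (Ultrafilter.exists_le (Filter.atTop : Filter ℕ)).choose

lemma uf_le : (uf : Filter ℕ) ≤ Filter.atTop := (Ultrafilter.exists_le _).choose_spec

lemma uf_ge (n : ℕ) : {N | n ≤ N} ∈ uf := uf_le (Filter.mem_atTop n)

variable [Fintype S] [Nonempty S]

lemma exists_ulim (s : ℕ → S) : ∃ w : S, {N | s N = w} ∈ uf := by
  by_contra hcon
  push_neg at hcon
  have h2 : ∀ w : S, {N | s N = w}ᶜ ∈ uf :=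
    fun w => Ultrafilter.compl_mem_iff_notMem.mpr (hcon w)
  have h3 : (⋂ w : S, {N | s N = w}ᶜ) ∈ uf := Filter.iInter_mem.mpr h2
  obtain ⟨N, hN⟩ := Filter.nonempty_of_mem h3
  simp only [Set.mem_iInter, Set.mem_compl_iff, Set.mem_setOf_eq] at hN
  exact hN (s N) rfl

noncomputable def ulim (s : ℕ → S) : S := (exists_ulim s).choose

lemma ulim_mem (s : ℕ → S) : {N | s N = ulim s} ∈ uf := (exists_ulim s).choose_spec

lemma ulim_unique {s : ℕ → S} {w : S} (h : {N | s N = w} ∈ uf) : ulim s = w := by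
  obtain ⟨N, h1, h2⟩ := Filter.nonempty_of_mem (Filter.inter_mem (ulim_mem s) h)
  exact h1 ▸ h2

/-- Ultrafilter limit of a family of partial evolutions is an evolution. -/
lemma evolution_ulim (fc fd : S → S → S → S) (init : ℤ → S) (e : ℕ → ℤ → ℕ → S)
    (hinit : ∀ j : ℤ, {N : ℕ | e N j 0 = init j} ∈ uf)
    (heq : ∀ (j : ℤ) (m : ℕ), 0 < m → {N : ℕ |
        e N j m = (if Even m then fc else fd)
          (e N (j - 1) ((m - 1) / 2)) (e N j (m - 1)) (e N (j + 1) (2 * m - 1))} ∈ uf) :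
    Evolution fc fd init (fun j m => ulim (fun N => e N j m)) := by
  constructor
  · intro j
    exact ulim_unique (hinit j)
  · intro j m hm
    have A := ulim_mem (fun N => e N j m)
    have A1 := ulim_mem (fun N => e N (j - 1) ((m - 1) / 2))
    have A2 := ulim_mem (fun N => e N j (m - 1))
    have A3 := ulim_mem (fun N => e N (j + 1) (2 * m - 1))
    have B := heq j m hm
    obtain ⟨N, hA, hA1, hA2, hA3, hB⟩ := Filter.nonempty_of_mem
      (Filter.inter_mem A (Filter.inter_mem A1 (Filter.inter_mem A2 (Filter.inter_mem A3 B))))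
    simp only [Set.mem_setOf_eq] at hA hA1 hA2 hA3 hB
    simp only [← hA, ← hA1, ← hA2, ← hA3]
    exact hB

/-- Every initial configuration admits at least one evolution. -/
lemma exists_evolution (fc fd : S → S → S → S) (init : ℤ → S) :
    ∃ c : ℤ → ℕ → S, Evolution fc fd init c := by
  classical
  set v : S := Classical.arbitrary S
  refine ⟨fun j m => ulim (fun N => trunc fc fd init v N j m), evolution_ulim fc fd init _ ?_ ?_⟩
  · intro j
    refine Filter.mem_of_superset (uf_ge j.toNat) ?_
    intro N hN
    have hj : j ≤ (N : ℤ) := le_trans (Int.self_le_toNat j) (by exact_mod_cast hN)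
    exact trunc_init fc fd init v N j hj
  · intro j m hm
    refine Filter.mem_of_superset (uf_ge j.toNat) ?_
    intro N hN
    have hj : j ≤ (N : ℤ) := le_trans (Int.self_le_toNat j) (by exact_mod_cast hN)
    exact trunc_eq fc fd init v N j hj m hm

end SscaNoDetector

/-- There is no self-similar cellular automaton (with distinct states `z = 0` and
`o = 1`), no cycle index `k ≥ 1` of cell 0 (representing a time `t > 0`), and no
local rule, such that when started at time 0 with a configuration from
`C = {0^∞} ∪ {single 1 at a positive index}`, the state of cell 0 at time `t` is
`1` if and only if the initial configuration contains a `1`. -/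
theorem ssca_no_detector {S : Type*} [Fintype S] [Nonempty S]
    (fc fd : S → S → S → S) (z o : S) (hzo : z ≠ o) (k : ℕ) (hk : 0 < k) :
    ¬ ((∀ c : ℤ → ℕ → S, Evolution fc fd (fun _ => z) c → c 0 k ≠ o) ∧
       (∀ p : ℤ, 0 < p →
          ∀ c : ℤ → ℕ → S,
            Evolution fc fd (fun l => if l = p then o else z) c → c 0 k = o)) := by
  open SscaNoDetector in
  rintro ⟨h0, h1⟩
  -- for each `N`, pick an evolution of the configuration with a single 1 at `N + 1`
  choose e he using fun N : ℕ =>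
    exists_evolution fc fd (fun l : ℤ => if l = (N : ℤ) + 1 then o else z)
  have hek : ∀ N : ℕ, e N 0 k = o :=
    fun N => h1 ((N : ℤ) + 1) (by positivity) (e N) (he N)
  -- the ultrafilter limit is an evolution of the all-zero configuration
  have hev : Evolution fc fd (fun _ => z) (fun j m => ulim (fun N => e N j m)) := by
    apply evolution_ulim
    · intro j
      refine Filter.mem_of_superset (uf_ge j.toNat) ?_
      intro N hN
      have hj : j ≤ (N : ℤ) := le_trans (Int.self_le_toNat j) (by exact_mod_cast hN)
      have := (he N).1 j
      simp only [Set.mem_setOf_eq, this, if_neg (by omega : ¬ j = (N : ℤ) + 1)]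
    · intro j m hm
      exact Filter.univ_mem' (fun N => (he N).2 j m hm)
  -- but its state at cell 0, cycle k, is `o`: contradiction
  exact h0 _ hev (ulim_unique (Filter.univ_mem' (fun N => hek N)))
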